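/- Assume c > 0, c + d ≥ 0 and λ₋, λ₊ ∈ (0,1]. If u is a function on T_N ∪ ∂T_N that vanishes on ∂T_N and satisfies Δ²ᴰ_N u(x,y) = 0 for every (x,y) ∈ T_N, then u is identically zero; that is, the discrete Dirichlet problem for the absorbed two-dimensional walk has only the trivial harmonic function with zero boundary data. -/

import Mathlib

noncomputable section

/-- Left jump rate of the two-dimensional walk: `c_{z,z−1} = cλ₋` if `z = 1`, else `c`. -/
def cMinus (c lm : ℝ) (z : ℤ) : ℝ := if z = 1 then c * lm else c

/-- Right jump rate of the two-dimensional walk: `c_{z,z+1} = cλ₊` if `z = N−1`, else `c`. -/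
def cPlus (N : ℤ) (c lp : ℝ) (z : ℤ) : ℝ := if z = N - 1 then c * lp else c

/-- The generator `Δ²ᴰ_N` of the two-dimensional random walk on the triangle
`T_N = {(x,y) : 1 ≤ x ≤ y ≤ N−1}` (absorbed at `∂T_N`), acting on functions
`f : ℤ × ℤ → ℝ`: for `x < y` it is the nearest-neighbour operator with rates
`cMinus`/`cPlus` plus the extra diagonal term `d N² (f(x,x) + f(x+1,x+1) − 2f(x,x+1))`
on the upper diagonal `y = x+1`; for `x = y` it is
`2N² (c_{x,x−1} f(x−1,x) + c_{x,x+1} f(x,x+1) − (c_{x,x−1}+c_{x,x+1}) f(x,x))`. -/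
def lap2D (N : ℤ) (c d lm lp : ℝ) (f : ℤ → ℤ → ℝ) (x y : ℤ) : ℝ :=
  if x = y then
    2 * (N : ℝ) ^ 2 * (cMinus c lm x * f (x - 1) x + cPlus N c lp x * f x (x + 1)
      - (cMinus c lm x + cPlus N c lp x) * f x x)
  else
    (N : ℝ) ^ 2 * (cMinus c lm x * (f (x - 1) y - f x y)
        + cPlus N c lp x * (f (x + 1) y - f x y)
        + cMinus c lm y * (f x (y - 1) - f x y)
        + cPlus N c lp y * (f x (y + 1) - f x y))
      + d * (N : ℝ) ^ 2 * (f x x + f (x + 1) (x + 1) - 2 * f x (x + 1))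
        * (if y = x + 1 then 1 else 0)

/-- (Uniqueness for the discrete Dirichlet problem.) Assume `c > 0`,
`c + d ≥ 0` and `λ₋, λ₊ ∈ (0,1]`. If `u` vanishes on `∂T_N` and is `Δ²ᴰ_N`-harmonic on
`T_N`, then `u` is identically zero on `T_N`. -/
theorem aux_nonpos (N : ℤ) (hN : 5 ≤ N) (c d : ℝ) (hc : 0 < c)
    (hcd : 0 ≤ c + d) (lm lp : ℝ) (hlm0 : 0 < lm) (hlp0 : 0 < lp)
    (u : ℤ → ℤ → ℝ)
    (hu0 : ∀ y : ℤ, 0 ≤ y → y ≤ N → u 0 y = 0)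
    (huN : ∀ x : ℤ, 0 ≤ x → x ≤ N → u x N = 0)
    (hu : ∀ x y : ℤ, 1 ≤ x → x ≤ y → y ≤ N - 1 → lap2D N c d lm lp u x y = 0) :
    ∀ x y : ℤ, 0 ≤ x → x ≤ y → y ≤ N → u x y ≤ 0 := by
  classical
  have hcm_pos : ∀ z : ℤ, 0 < cMinus c lm z := by
    intro z; unfold cMinus; split
    · exact mul_pos hc hlm0
    · exact hc
  have hcp_pos : ∀ z : ℤ, 0 < cPlus N c lp z := by
    intro z; unfold cPlus; split
    · exact mul_pos hc hlp0
    · exact hc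
  have hN5 : (5:ℝ) ≤ (N:ℝ) := by exact_mod_cast hN
  have hN2 : (0:ℝ) < (N:ℝ)^2 := by nlinarith
  set S : Finset (ℤ × ℤ) :=
    (Finset.Icc 0 N ×ˢ Finset.Icc 0 N).filter (fun p => p.1 ≤ p.2) with hS
  have hmem : ∀ x y : ℤ, 0 ≤ x → x ≤ y → y ≤ N → (x, y) ∈ S := by
    intro x y hx hxy hy
    simp only [hS, Finset.mem_filter, Finset.mem_product, Finset.mem_Icc]
    omega
  have hSne : S.Nonempty := ⟨(0,0), hmem 0 0 le_rfl le_rfl (by omega)⟩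
  set M : ℝ := S.sup' hSne (fun p => u p.1 p.2) with hM
  have hle : ∀ x y : ℤ, 0 ≤ x → x ≤ y → y ≤ N → u x y ≤ M := fun x y hx hxy hy =>
    Finset.le_sup' (f := fun p => u p.1 p.2) (hmem x y hx hxy hy)
  suffices hM0 : M ≤ 0 by
    intro x y hx hxy hy; exact (hle x y hx hxy hy).trans hM0
  obtain ⟨q, hqS, hqM⟩ := Finset.exists_mem_eq_sup' hSne (fun p => u p.1 p.2)
  set A : Finset (ℤ × ℤ) := S.filter (fun p => u p.1 p.2 = M) with hA
  have hAne : A.Nonempty := ⟨q, by simp [hA, hqS, hqM.symm]; exact hM.symm⟩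
  obtain ⟨p, hpA, hpmin⟩ := Finset.exists_min_image A Prod.fst hAne
  obtain ⟨x, y⟩ := p
  have hpA' := hpA
  simp only [hA, Finset.mem_filter] at hpA'
  obtain ⟨hpS, hpM⟩ := hpA'
  simp only [hS, Finset.mem_filter, Finset.mem_product, Finset.mem_Icc] at hpS
  obtain ⟨⟨⟨hx0, hxN⟩, _, hyN⟩, hxy⟩ := hpS
  -- if the maximizer is on the boundary, M = 0
  rcases eq_or_lt_of_le hx0 with hx0' | hx1
  · rw [← hpM, ← hx0', hu0 y (by omega) hyN]
  rcases eq_or_lt_of_le hyN with hyN' | hyN1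
  · rw [← hpM, hyN', huN x (by omega) (by omega)]
  -- interior maximizer: show u (x-1) y = M, contradicting minimality of x
  exfalso
  have hx1 : 1 ≤ x := hx1
  have hyN1 : y ≤ N - 1 := by omega
  have hkey : u (x - 1) y = M := by
    have ha : u (x-1) y ≤ M := hle _ _ (by omega) (by omega) (by omega)
    refine le_antisymm ha ?_
    by_contra hcon
    push_neg at hcon
    rcases eq_or_lt_of_le hxy with hd | hlt
    · -- diagonal case x = y
      subst hd
      have h := hu x x hx1 le_rfl hyN1
      simp only [lap2D, if_pos rfl] at h
      rcases mul_eq_zero.mp h with h' | h'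
      · nlinarith
      rw [hpM] at h'
      have hb : u x (x+1) ≤ M := hle _ _ (by omega) (by omega) (by omega)
      nlinarith [mul_pos (hcm_pos x) (sub_pos.2 hcon),
        mul_nonneg (hcp_pos x).le (sub_nonneg.2 hb)]
    · have h := hu x y hx1 hxy hyN1
      simp only [lap2D, if_neg (by omega : ¬ x = y)] at h
      rcases eq_or_ne y (x+1) with hy1 | hy1
      · -- y = x + 1
        subst hy1
        rw [if_pos rfl] at h
        have e1 : x + 1 - 1 = x := by ring
        have e2 : x + 1 + 1 = x + 2 := by ring
        rw [e1] at h
        rw [e2] at h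
        have hcmy : cMinus c lm (x+1) = c := if_neg (by omega)
        have hcpx : cPlus N c lp x = c := if_neg (by omega)
        rw [hcmy, hcpx, hpM] at h
        have hb : u (x+1) (x+1) ≤ M := hle _ _ (by omega) le_rfl (by omega)
        have he : u x x ≤ M := hle _ _ (by omega) le_rfl (by omega)
        have hf : u x (x+2) ≤ M := hle _ _ (by omega) (by omega) (by omega)
        nlinarith [mul_pos hN2 (mul_pos (hcm_pos x) (sub_pos.2 hcon)),
          mul_nonneg hN2.le (mul_nonneg hcd (sub_nonneg.2 hb)),
          mul_nonneg hN2.le (mul_nonneg hcd (sub_nonneg.2 he)),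
          mul_nonneg hN2.le (mul_nonneg (hcp_pos (x+1)).le (sub_nonneg.2 hf))]
      · rw [if_neg hy1] at h
        rw [hpM] at h
        have hb : u (x+1) y ≤ M := hle _ _ (by omega) (by omega) (by omega)
        have he : u x (y-1) ≤ M := hle _ _ (by omega) (by omega) (by omega)
        have hf : u x (y+1) ≤ M := hle _ _ (by omega) (by omega) (by omega)
        nlinarith [mul_pos hN2 (mul_pos (hcm_pos x) (sub_pos.2 hcon)),
          mul_nonneg hN2.le (mul_nonneg (hcp_pos x).le (sub_nonneg.2 hb)),
          mul_nonneg hN2.le (mul_nonneg (hcm_pos y).le (sub_nonneg.2 he)),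
          mul_nonneg hN2.le (mul_nonneg (hcp_pos y).le (sub_nonneg.2 hf))]
  have hmemA : (x - 1, y) ∈ A := by
    simp only [hA, Finset.mem_filter]
    exact ⟨hmem _ _ (by omega) (by omega) (by omega), hkey⟩
  have := hpmin _ hmemA
  simp only at this
  omega

theorem lap2D_neg (N : ℤ) (c d lm lp : ℝ) (u : ℤ → ℤ → ℝ) (x y : ℤ) :
    lap2D N c d lm lp (fun a b => -u a b) x y = -lap2D N c d lm lp u x y := by
  unfold lap2D
  split_ifs <;> ring

theorem dirichlet_uniqueness (N : ℤ) (hN : 5 ≤ N) (c d : ℝ) (hc : 0 < c)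
    (hcd : 0 ≤ c + d) (lm lp : ℝ) (hlm0 : 0 < lm) (hlm1 : lm ≤ 1)
    (hlp0 : 0 < lp) (hlp1 : lp ≤ 1) (u : ℤ → ℤ → ℝ)
    (hu0 : ∀ y : ℤ, 0 ≤ y → y ≤ N → u 0 y = 0)
    (huN : ∀ x : ℤ, 0 ≤ x → x ≤ N → u x N = 0)
    (hu : ∀ x y : ℤ, 1 ≤ x → x ≤ y → y ≤ N - 1 → lap2D N c d lm lp u x y = 0) :
    ∀ x y : ℤ, 1 ≤ x → x ≤ y → y ≤ N - 1 → u x y = 0 := by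
  intro x y hx hxy hy
  have h1 := aux_nonpos N hN c d hc hcd lm lp hlm0 hlp0 u hu0 huN hu x y
    (by omega) hxy (by omega)
  have h2 := aux_nonpos N hN c d hc hcd lm lp hlm0 hlp0 (fun a b => -u a b)
    (fun y hy1 hy2 => by simp [hu0 y hy1 hy2])
    (fun x hx1 hx2 => by simp [huN x hx1 hx2])
    (fun x y hx1 hx2 hx3 => by rw [lap2D_neg, hu x y hx1 hx2 hx3, neg_zero])
    x y (by omega) hxy (by omega)
  simp only [neg_nonpos] at h2
  exact le_antisymm h1 h2

end
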